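/- Let Γ* and Γ*' be partitions of {1,...,n}, with Γ*' having k blocks. The sum of unCD distances from the simple extension Γ₀ of Γ* to all k+1 extensions of Γ*' equals n + (k+1)·unCD(Γ*,Γ*'). -/

import Mathlib

open Finset

/-- `i` and `j` lie in the same block of the partition `Γ`. -/
def samePart {n : ℕ} (Γ : Finpartition (univ : Finset (Fin n))) (i j : Fin n) : Prop :=
  ∃ S ∈ Γ.parts, i ∈ S ∧ j ∈ S

open scoped Classical in
/-- Unnormalized Cluster Difference between two partitions of `{1,…,n}`. -/
noncomputable def unCD {n : ℕ} (Γ₁ Γ₂ : Finpartition (univ : Finset (Fin n))) : ℕ :=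
  ((univ : Finset (Fin n × Fin n)).filter
    (fun p => p.1 < p.2 ∧ ¬ (samePart Γ₁ p.1 p.2 ↔ samePart Γ₂ p.1 p.2))).card

/-- `Γ` is the simple extension of `Γs`: blocks of `Γs` (reindexed) plus the singleton `{n+1}`. -/
def IsSimpleExt {n : ℕ} (Γs : Finpartition (univ : Finset (Fin n)))
    (Γ : Finpartition (univ : Finset (Fin (n + 1)))) : Prop :=
  Γ.parts = insert {Fin.last n} (Γs.parts.image (fun S => S.image Fin.castSucc))

/-- `Γ` is the complex extension of `Γs` along its block `S`:
the element `n+1` is added to the block `S`. -/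
def IsComplexExt {n : ℕ} (Γs : Finpartition (univ : Finset (Fin n))) (S : Finset (Fin n))
    (Γ : Finpartition (univ : Finset (Fin (n + 1)))) : Prop :=
  S ∈ Γs.parts ∧
    Γ.parts = insert (insert (Fin.last n) (S.image Fin.castSucc))
      ((Γs.parts.erase S).image (fun T => T.image Fin.castSucc))

/-- `Γ` is an extension of `Γs` (equivalently, `Γs` is the reduct of `Γ`). -/
def IsExt {n : ℕ} (Γs : Finpartition (univ : Finset (Fin n)))
    (Γ : Finpartition (univ : Finset (Fin (n + 1)))) : Prop :=
  IsSimpleExt Γs Γ ∨ ∃ S, IsComplexExt Γs S Γ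

noncomputable instance {n : ℕ} : Fintype (Finpartition (univ : Finset (Fin n))) :=
  Fintype.ofInjective Finpartition.parts (fun _ _ h => Finpartition.ext h)

noncomputable instance {n : ℕ} : DecidableEq (Finpartition (univ : Finset (Fin n))) :=
  Classical.decEq _

lemma simpleExt_samePart_cast {n : ℕ} {Γs : Finpartition (univ : Finset (Fin n))}
    {Γ : Finpartition (univ : Finset (Fin (n + 1)))} (h : IsSimpleExt Γs Γ) (i j : Fin n) :
    samePart Γ i.castSucc j.castSucc ↔ samePart Γs i j := by
  constructor
  · rintro ⟨S, hS, hi, hj⟩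
    rw [h, mem_insert] at hS
    rcases hS with rfl | hS
    · simp only [mem_singleton] at hi
      exact absurd hi (Fin.castSucc_lt_last i).ne
    · obtain ⟨T, hT, rfl⟩ := mem_image.1 hS
      refine ⟨T, hT, ?_, ?_⟩
      · obtain ⟨x, hx, hxi⟩ := mem_image.1 hi
        rwa [Fin.castSucc_injective n hxi] at hx
      · obtain ⟨x, hx, hxj⟩ := mem_image.1 hj
        rwa [Fin.castSucc_injective n hxj] at hx
  · rintro ⟨T, hT, hi, hj⟩
    exact ⟨T.image Fin.castSucc, by rw [h]; exact mem_insert_of_mem (mem_image_of_mem _ hT),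
      mem_image_of_mem _ hi, mem_image_of_mem _ hj⟩

lemma simpleExt_not_samePart_last {n : ℕ} {Γs : Finpartition (univ : Finset (Fin n))}
    {Γ : Finpartition (univ : Finset (Fin (n + 1)))} (h : IsSimpleExt Γs Γ) (i : Fin n) :
    ¬ samePart Γ i.castSucc (Fin.last n) := by
  rintro ⟨S, hS, hi, hl⟩
  rw [h, mem_insert] at hS
  rcases hS with rfl | hS
  · simp only [mem_singleton] at hi
    exact absurd hi (Fin.castSucc_lt_last i).ne
  · obtain ⟨T, hT, rfl⟩ := mem_image.1 hS
    obtain ⟨x, _, hx⟩ := mem_image.1 hl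
    exact absurd hx (Fin.castSucc_lt_last x).ne

lemma complexExt_samePart_cast {n : ℕ} {Γs : Finpartition (univ : Finset (Fin n))}
    {S : Finset (Fin n)} {Γ : Finpartition (univ : Finset (Fin (n + 1)))}
    (h : IsComplexExt Γs S Γ) (i j : Fin n) :
    samePart Γ i.castSucc j.castSucc ↔ samePart Γs i j := by
  obtain ⟨hSmem, hparts⟩ := h
  constructor
  · rintro ⟨T, hT, hi, hj⟩
    rw [hparts, mem_insert] at hT
    rcases hT with rfl | hT
    · rw [mem_insert] at hi hj
      rcases hi with hi | hi
      · exact absurd hi (Fin.castSucc_lt_last i).ne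
      rcases hj with hj | hj
      · exact absurd hj (Fin.castSucc_lt_last j).ne
      obtain ⟨x, hx, hxi⟩ := mem_image.1 hi
      obtain ⟨y, hy, hyj⟩ := mem_image.1 hj
      rw [Fin.castSucc_injective n hxi] at hx
      rw [Fin.castSucc_injective n hyj] at hy
      exact ⟨S, hSmem, hx, hy⟩
    · obtain ⟨U, hU, rfl⟩ := mem_image.1 hT
      obtain ⟨x, hx, hxi⟩ := mem_image.1 hi
      obtain ⟨y, hy, hyj⟩ := mem_image.1 hj
      rw [Fin.castSucc_injective n hxi] at hx
      rw [Fin.castSucc_injective n hyj] at hy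
      exact ⟨U, mem_of_mem_erase hU, hx, hy⟩
  · rintro ⟨T, hT, hi, hj⟩
    by_cases hTS : T = S
    · subst hTS
      exact ⟨insert (Fin.last n) (T.image Fin.castSucc), by rw [hparts]; exact mem_insert_self _ _,
        mem_insert_of_mem (mem_image_of_mem _ hi), mem_insert_of_mem (mem_image_of_mem _ hj)⟩
    · exact ⟨T.image Fin.castSucc,
        by rw [hparts]; exact mem_insert_of_mem (mem_image_of_mem _ (mem_erase.2 ⟨hTS, hT⟩)),
        mem_image_of_mem _ hi, mem_image_of_mem _ hj⟩

lemma complexExt_samePart_last {n : ℕ} {Γs : Finpartition (univ : Finset (Fin n))}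
    {S : Finset (Fin n)} {Γ : Finpartition (univ : Finset (Fin (n + 1)))}
    (h : IsComplexExt Γs S Γ) (i : Fin n) :
    samePart Γ i.castSucc (Fin.last n) ↔ i ∈ S := by
  obtain ⟨hSmem, hparts⟩ := h
  constructor
  · rintro ⟨T, hT, hi, hl⟩
    rw [hparts, mem_insert] at hT
    rcases hT with rfl | hT
    · rw [mem_insert] at hi
      rcases hi with hi | hi
      · exact absurd hi (Fin.castSucc_lt_last i).ne
      obtain ⟨x, hx, hxi⟩ := mem_image.1 hi
      rwa [Fin.castSucc_injective n hxi] at hx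
    · obtain ⟨U, _, rfl⟩ := mem_image.1 hT
      obtain ⟨x, _, hx⟩ := mem_image.1 hl
      exact absurd hx (Fin.castSucc_lt_last x).ne
  · intro hi
    exact ⟨insert (Fin.last n) (S.image Fin.castSucc), by rw [hparts]; exact mem_insert_self _ _,
      mem_insert_of_mem (mem_image_of_mem _ hi), mem_insert_self _ _⟩

open scoped Classical in
lemma unCD_ext {n : ℕ} {Γs Γs' : Finpartition (univ : Finset (Fin n))}
    {Γ₀ Γ' : Finpartition (univ : Finset (Fin (n + 1)))} (A : Finset (Fin n))
    (h1 : ∀ i j : Fin n, samePart Γ₀ i.castSucc j.castSucc ↔ samePart Γs i j)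
    (h2 : ∀ i : Fin n, ¬ samePart Γ₀ i.castSucc (Fin.last n))
    (h1' : ∀ i j : Fin n, samePart Γ' i.castSucc j.castSucc ↔ samePart Γs' i j)
    (h2' : ∀ i : Fin n, samePart Γ' i.castSucc (Fin.last n) ↔ i ∈ A) :
    unCD Γ₀ Γ' = unCD Γs Γs' + A.card := by
  classical
  have key : ((univ : Finset (Fin (n + 1) × Fin (n + 1))).filter
      (fun p => p.1 < p.2 ∧ ¬ (samePart Γ₀ p.1 p.2 ↔ samePart Γ' p.1 p.2)))
      = (((univ : Finset (Fin n × Fin n)).filter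
          (fun q => q.1 < q.2 ∧ ¬ (samePart Γs q.1 q.2 ↔ samePart Γs' q.1 q.2))).image
            (fun q => (q.1.castSucc, q.2.castSucc)))
        ∪ A.image (fun i => (i.castSucc, Fin.last n)) := by
    ext ⟨p1, p2⟩
    simp only [mem_filter, mem_univ, true_and, mem_union, mem_image, Prod.mk.injEq, Prod.exists]
    constructor
    · rintro ⟨hlt, hne⟩
      by_cases hp2 : p2 = Fin.last n
      · subst hp2
        right
        have hp1 : p1 ≠ Fin.last n := fun hh => absurd hlt (by rw [hh]; exact lt_irrefl _)
        obtain ⟨i, rfl⟩ := Fin.exists_castSucc_eq.2 hp1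
        refine ⟨i, ?_, rfl, rfl⟩
        by_contra hiA
        exact hne (iff_of_false (h2 i) (fun hh => hiA ((h2' i).1 hh)))
      · left
        have hp2' : p2 < Fin.last n := (Fin.le_last _).lt_of_ne hp2
        have hp1 : p1 ≠ Fin.last n := fun hh => absurd (hh ▸ hlt) (not_lt.2 hp2'.le)
        obtain ⟨i, rfl⟩ := Fin.exists_castSucc_eq.2 hp1
        obtain ⟨j, rfl⟩ := Fin.exists_castSucc_eq.2 hp2
        refine ⟨i, j, ⟨Fin.castSucc_lt_castSucc_iff.1 hlt, ?_⟩, rfl, rfl⟩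
        rw [h1 i j, h1' i j] at hne
        exact hne
    · rintro (⟨i, j, ⟨hq1, hq2⟩, rfl, rfl⟩ | ⟨i, hi, rfl, rfl⟩)
      · exact ⟨Fin.castSucc_lt_castSucc_iff.2 hq1, by rw [h1, h1']; exact hq2⟩
      · refine ⟨Fin.castSucc_lt_last i, fun hiff => ?_⟩
        exact h2 i (hiff.2 ((h2' i).2 hi))
  have hinj1 : Function.Injective (fun q : Fin n × Fin n => (q.1.castSucc, q.2.castSucc)) := by
    intro a b hab
    obtain ⟨ha, hb⟩ := Prod.mk.injEq .. ▸ hab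
    exact Prod.ext (Fin.castSucc_injective n ha) (Fin.castSucc_injective n hb)
  have hinj2 : Function.Injective (fun i : Fin n => (i.castSucc, Fin.last n)) := by
    intro a b hab
    exact Fin.castSucc_injective n (congrArg Prod.fst hab)
  have hdisj : Disjoint
      (((univ : Finset (Fin n × Fin n)).filter
          (fun q => q.1 < q.2 ∧ ¬ (samePart Γs q.1 q.2 ↔ samePart Γs' q.1 q.2))).image
            (fun q => (q.1.castSucc, q.2.castSucc)))
      (A.image (fun i => (i.castSucc, Fin.last n))) := by
    rw [Finset.disjoint_left]
    rintro p hp hp'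
    obtain ⟨q, -, rfl⟩ := mem_image.1 hp
    obtain ⟨i, -, hip⟩ := mem_image.1 hp'
    exact absurd (congrArg Prod.snd hip).symm (Fin.castSucc_lt_last q.2).ne
  rw [unCD, unCD, key, card_union_of_disjoint hdisj, card_image_of_injective _ hinj1,
    card_image_of_injective _ hinj2]

theorem stmt10 {n : ℕ} {Γs Γs' : Finpartition (univ : Finset (Fin n))}
    {Γ₀ Γ₀' : Finpartition (univ : Finset (Fin (n + 1)))}
    (h₀ : IsSimpleExt Γs Γ₀) (h₀' : IsSimpleExt Γs' Γ₀')
    (E' : Finset (Fin n) → Finpartition (univ : Finset (Fin (n + 1))))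
    (hE' : ∀ S ∈ Γs'.parts, IsComplexExt Γs' S (E' S)) :
    unCD Γ₀ Γ₀' + ∑ S ∈ Γs'.parts, unCD Γ₀ (E' S)
      = n + (Γs'.parts.card + 1) * unCD Γs Γs' := by
  classical
  have e0 : unCD Γ₀ Γ₀' = unCD Γs Γs' + (∅ : Finset (Fin n)).card :=
    unCD_ext ∅ (simpleExt_samePart_cast h₀) (simpleExt_not_samePart_last h₀)
      (simpleExt_samePart_cast h₀')
      (fun i => by simp [simpleExt_not_samePart_last h₀' i])
  have eS : ∀ S ∈ Γs'.parts, unCD Γ₀ (E' S) = unCD Γs Γs' + S.card := fun S hS =>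
    unCD_ext S (simpleExt_samePart_cast h₀) (simpleExt_not_samePart_last h₀)
      (complexExt_samePart_cast (hE' S hS)) (complexExt_samePart_last (hE' S hS))
  rw [e0, Finset.sum_congr rfl eS, Finset.sum_add_distrib, Finset.sum_const,
    Γs'.sum_card_parts, card_univ, Fintype.card_fin, card_empty, smul_eq_mul]
  ring
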